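/- arXiv:2505.04986 — 5 statements merged into one kernel-verified Lean document; each statement's English description precedes it below -/
import Mathlib

section
/- Under the setup of the previous lemma, with imputation operator I(x, O) defined by [I(x,O)]_j = x_j if j ∉ O and [I(x,O)]_j = φ_j({x_l}_{l∉O}) if j ∈ O, sure detection O* ⊆ D(X̃) together with isolated detection implies I(X̃, D(X̃)) = I(X, D(X) ∪ O*). That is, the detect-then-impute output on the contaminated vector equals the imputation of the clean vector with mask D(X) ∪ O*. -/
/-- Detect-then-impute identity: under sure detection and isolated detection,
`I(X̃, D(X̃)) = I(X, D(X) ∪ O*)`. -/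
theorem detect_then_impute_identity (d : ℕ) (X Z : Fin d → ℝ) (Ostar : Finset (Fin d))
    (s : Fin d → ℝ → ℝ) (τ : Fin d → ℝ)
    (Xt : Fin d → ℝ) (hXt : ∀ j, Xt j = if j ∈ Ostar then Z j else X j)
    (D : (Fin d → ℝ) → Finset (Fin d))
    (hD : ∀ x, D x = Finset.univ.filter (fun j => τ j < s j (x j)))
    (hsure : Ostar ⊆ D Xt)
    (I : (Fin d → ℝ) → Finset (Fin d) → (Fin d → ℝ))
    -- unmasked coordinates are left unchanged
    (hIobs : ∀ x O j, j ∉ O → I x O j = x j)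
    -- imputed values depend only on the coordinates outside the mask
    (hIdep : ∀ x x' O, (∀ l ∉ O, x l = x' l) → I x O = I x' O) :
    I Xt (D Xt) = I X (D X ∪ Ostar) := by
  have hDeq : D Xt = D X ∪ Ostar := by
    ext j
    by_cases hj : j ∈ Ostar
    · simp [hsure hj, Finset.mem_union, hj]
    · have : Xt j = X j := by rw [hXt j]; simp [hj]
      simp [hD, Finset.mem_union, hj, this]
  rw [hDeq]
  exact hIdep Xt X (D X ∪ Ostar) (fun l hl => by
    rw [hXt l]
    have : l ∉ Ostar := fun h => hl (Finset.mem_union_right _ h)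
    simp [this])
end

section
/- Let R_{n_0},...,R_{n+1} be exchangeable real-valued random variables, and let q̂ be the ⌈(1-α)(m+1)⌉-th smallest value among R_{n_0},...,R_n, where m = n - n_0 + 1. Then P(R_{n+1} ≤ q̂) ≥ 1 - α. -/
open MeasureTheory

/-- The `k`-th smallest element (k ≥ 1) of a finite list of reals. -/
noncomputable def orderStat (k : ℕ) (r : List ℝ) : ℝ :=
  (r.mergeSort (fun a b => a ≤ b)).getD (k - 1) 0

theorem card_filter_eq_countP_ofFn : ∀ (n : ℕ) (y : Fin n → ℝ) (p : ℝ → Bool),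
    (Finset.univ.filter fun i => p (y i)).card = (List.ofFn y).countP p := by
  intro n
  induction n with
  | zero => simp
  | succ n ih =>
    intro y p
    rw [List.ofFn_succ, List.countP_cons, Finset.card_filter, Fin.sum_univ_succ,
      ← Finset.card_filter, ih (fun i => y i.succ) p]
    by_cases h : p (y 0) <;> simp [h, add_comm]

theorem le_orderStat_of_count_lt {m k : ℕ} (hk1 : 1 ≤ k) (hkm : k ≤ m)
    (y : Fin m → ℝ) (v : ℝ)
    (h : (Finset.univ.filter fun i => y i < v).card < k) :
    v ≤ orderStat k (List.ofFn y) := by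
  by_contra hv
  push_neg at hv
  set l := List.ofFn y with hl
  set s := l.mergeSort (fun a b => a ≤ b) with hs
  have hlen : s.length = m := by
    rw [hs, List.length_mergeSort, hl, List.length_ofFn]
  have hkm' : k - 1 < s.length := by omega
  have hsorted : List.Pairwise (fun a b : ℝ => (a ≤ b : Bool) = true) s := by
    apply List.pairwise_mergeSort
    · intro a b c hab hbc
      simp only [decide_eq_true_eq] at *
      exact le_trans hab hbc
    · intro a b
      simp [le_total]
  have hget : ∀ j : ℕ, j < k → s.getD j 0 < v := by
    intro j hj
    have hjlen : j < s.length := by omega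
    have hle : s[j] ≤ s[k-1] := by
      rcases lt_or_eq_of_le (Nat.le_of_lt_succ (by omega : j < (k-1)+1)) with hlt | heq
      · have := List.pairwise_iff_get.mp hsorted ⟨j, hjlen⟩ ⟨k-1, hkm'⟩ hlt
        simpa using this
      · simp [heq]
    have : s.getD (k-1) 0 < v := by
      rw [orderStat] at hv; exact hv
    rw [List.getD_eq_getElem _ _ hjlen]
    calc s[j] ≤ s[k-1] := hle
      _ = s.getD (k-1) 0 := (List.getD_eq_getElem _ _ hkm').symm
      _ < v := this
  have htake : ∀ a ∈ s.take k, (decide (a < v)) = true := by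
    intro a ha
    obtain ⟨j, hjl, hja⟩ := List.mem_iff_getElem.mp ha
    have hjk : j < k := by
      have := hjl; rw [List.length_take] at this; omega
    have : (s.take k)[j] = s[j]'(by omega) := List.getElem_take
    rw [this] at hja
    subst hja
    simp only [decide_eq_true_eq]
    have := hget j hjk
    rwa [List.getD_eq_getElem _ _ (by omega)] at this
  have hcount : k ≤ s.countP (fun a => decide (a < v)) := by
    have h1 : (s.take k).countP (fun a => decide (a < v)) = (s.take k).length :=
      List.countP_eq_length.mpr htake
    have h2 : (s.take k).length = k := by rw [List.length_take]; omega
    have h3 := (List.take_sublist k s).countP_le (p := fun a => decide (a < v))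
    omega
  have hperm : s.countP (fun a => decide (a < v)) = l.countP (fun a => decide (a < v)) :=
    (List.mergeSort_perm l _).countP_eq _
  have hcard : (Finset.univ.filter fun i => y i < v).card
      = l.countP (fun a => decide (a < v)) := by
    have := card_filter_eq_countP_ofFn m y (fun a => decide (a < v))
    simpa using this
  omega

theorem rank_count_lemma {n : ℕ} (x : Fin n → ℝ) (k : ℕ) (hk : k ≤ n) :
    k ≤ (Finset.univ.filter fun j =>
      (Finset.univ.filter fun i => x i < x j).card < k).card := by
  classical
  set S := Finset.univ.filter fun j : Fin n =>
      (Finset.univ.filter fun i => x i < x j).card < k with hS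
  set T := Finset.univ.filter fun j : Fin n =>
      ¬ (Finset.univ.filter fun i => x i < x j).card < k with hT
  rcases T.eq_empty_or_nonempty with hE | hNE
  · have : S = Finset.univ := by
      ext j
      simp only [hS, Finset.mem_filter, Finset.mem_univ, true_and, iff_true]
      by_contra hj
      have : j ∈ T := Finset.mem_filter.mpr ⟨Finset.mem_univ _, hj⟩
      simp [hE] at this
    rw [this]
    simpa using hk
  · obtain ⟨j0, hj0T, hj0min⟩ := T.exists_min_image x hNE
    have hj0 : k ≤ (Finset.univ.filter fun i => x i < x j0).card := by
      have := (Finset.mem_filter.mp hj0T).2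
      omega
    have hsub : (Finset.univ.filter fun i => x i < x j0) ⊆ S := by
      intro i hi
      have hxi : x i < x j0 := (Finset.mem_filter.mp hi).2
      simp only [hS, Finset.mem_filter, Finset.mem_univ, true_and]
      by_contra hik
      have : i ∈ T := Finset.mem_filter.mpr ⟨Finset.mem_univ _, hik⟩
      exact absurd (hj0min i this) (not_le.mpr hxi)
    calc k ≤ (Finset.univ.filter fun i => x i < x j0).card := hj0
      _ ≤ S.card := Finset.card_le_card hsub

theorem card_filter_comp_equiv {n : ℕ} (σ : Equiv.Perm (Fin n)) (p : Fin n → Prop)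
    [DecidablePred p] :
    (Finset.univ.filter fun i => p (σ i)).card = (Finset.univ.filter p).card := by
  classical
  apply Finset.card_bij (fun i _ => σ i)
  · intro i hi
    simp only [Finset.mem_filter, Finset.mem_univ, true_and] at hi ⊢
    exact hi
  · intro a ha b hb hab
    exact σ.injective hab
  · intro b hb
    refine ⟨σ.symm b, ?_, by simp⟩
    simp only [Finset.mem_filter, Finset.mem_univ, true_and] at hb ⊢
    simpa using hb

/-- Split conformal coverage: for exchangeable residuals `R_0, …, R_m`, the last one is
at most the `⌈(1-α)(m+1)⌉`-th smallest of the first `m` with probability at least `1-α`. -/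
theorem conformal_coverage {Ω : Type*} [MeasurableSpace Ω]
    (ℙ : Measure Ω) [IsProbabilityMeasure ℙ]
    (m : ℕ) (α : ℝ) (hα0 : 0 < α) (hα1 : α < 1)
    (R : Fin (m + 1) → Ω → ℝ) (hmeas : ∀ i, Measurable (R i))
    (hexch : ∀ σ : Equiv.Perm (Fin (m + 1)),
      Measure.map (fun ω i => R (σ i) ω) ℙ = Measure.map (fun ω i => R i ω) ℙ)
    (hk : (⌈(1 - α) * (m + 1)⌉ : ℤ) ≤ (m : ℤ)) :
    ENNReal.ofReal (1 - α) ≤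
      ℙ {ω | R (Fin.last m) ω ≤
        orderStat (⌈(1 - α) * (m + 1 : ℝ)⌉).toNat
          (List.ofFn fun i : Fin m => R i.castSucc ω)} := by
  classical
  set k : ℕ := (⌈(1 - α) * (m + 1 : ℝ)⌉).toNat with hkdef
  have hpos : (0:ℝ) < (1 - α) * (m + 1) := by
    apply mul_pos (by linarith) (by positivity)
  have hceil_pos : 0 < ⌈(1 - α) * (m + 1 : ℝ)⌉ := Int.ceil_pos.mpr hpos
  have hk1 : 1 ≤ k := by
    rw [hkdef]; omega
  have hkm : k ≤ m := by
    rw [hkdef]; omega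
  have hkreal : (1 - α) * (m + 1) ≤ (k : ℝ) := by
    have hknat : (k : ℤ) = ⌈(1 - α) * (m + 1 : ℝ)⌉ := by
      rw [hkdef]; exact Int.toNat_of_nonneg hceil_pos.le
    calc (1 - α) * (m + 1) ≤ (⌈(1 - α) * (m + 1 : ℝ)⌉ : ℝ) := Int.le_ceil _
      _ = (k : ℝ) := by exact_mod_cast congrArg (fun z : ℤ => (z : ℝ)) hknat.symm
  -- the vector map
  set V : Ω → Fin (m + 1) → ℝ := fun ω i => R i ω with hV
  have hVmeas : Measurable V := measurable_pi_lambda _ hmeas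
  -- measurable "rank" sets
  set B : Fin (m + 1) → Set (Fin (m + 1) → ℝ) := fun j =>
    {x | (Finset.univ.filter fun i => x i < x j).card < k} with hB
  have hBmeas : ∀ j, MeasurableSet (B j) := by
    intro j
    have hg : Measurable fun x : Fin (m + 1) → ℝ =>
        (Finset.univ.filter fun i => x i < x j).card := by
      simp only [Finset.card_filter]
      apply Finset.measurable_sum
      intro i _
      exact Measurable.ite (measurableSet_lt (measurable_pi_apply i) (measurable_pi_apply j))
        measurable_const measurable_const
    exact hg measurableSet_Iio
  -- all events V⁻¹(B j) have the same probability
  have hAeq : ∀ j, ℙ (V ⁻¹' B j) = ℙ (V ⁻¹' B (Fin.last m)) := by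
    intro j
    set σ : Equiv.Perm (Fin (m + 1)) := Equiv.swap j (Fin.last m) with hσ
    have hW : Measurable fun ω => fun i => R (σ i) ω :=
      measurable_pi_lambda _ fun i => hmeas (σ i)
    have h1 : ℙ (V ⁻¹' B (Fin.last m)) =
        (Measure.map (fun ω i => R i ω) ℙ) (B (Fin.last m)) :=
      (Measure.map_apply hVmeas (hBmeas _)).symm
    have h2 : (Measure.map (fun ω i => R i ω) ℙ) (B (Fin.last m)) =
        (Measure.map (fun ω i => R (σ i) ω) ℙ) (B (Fin.last m)) := by
      rw [hexch σ]
    have h3 : (Measure.map (fun ω i => R (σ i) ω) ℙ) (B (Fin.last m)) =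
        ℙ ((fun ω i => R (σ i) ω) ⁻¹' B (Fin.last m)) :=
      Measure.map_apply hW (hBmeas _)
    have h4 : ((fun ω i => R (σ i) ω) ⁻¹' B (Fin.last m)) = V ⁻¹' B j := by
      ext ω
      simp only [Set.mem_preimage, hB, Set.mem_setOf_eq, hV]
      have hσlast : σ (Fin.last m) = j := Equiv.swap_apply_right _ _
      have hc : (Finset.univ.filter fun i => R (σ i) ω < R (σ (Fin.last m)) ω).card
          = (Finset.univ.filter fun i => R i ω < R j ω).card := by
        simp only [hσlast]
        exact card_filter_comp_equiv σ (fun i => R i ω < R j ω)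
      omega
    rw [h1, h2, h3, h4]
  -- sum of probabilities is at least k
  have hsum : (k : ENNReal) ≤ ∑ j : Fin (m + 1), ℙ (V ⁻¹' B j) := by
    have heq : ∑ j : Fin (m + 1), ℙ (V ⁻¹' B j) =
        ∫⁻ ω, ∑ j : Fin (m + 1), (V ⁻¹' B j).indicator (fun _ => (1 : ENNReal)) ω ∂ℙ := by
      rw [lintegral_finset_sum _ (fun j _ =>
        (measurable_const.indicator (hVmeas (hBmeas j))))]
      refine Finset.sum_congr rfl fun j _ => ?_
      rw [lintegral_indicator (hVmeas (hBmeas j))]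
      simp
    rw [heq]
    have hpt : ∀ ω, (k : ENNReal) ≤
        ∑ j : Fin (m + 1), (V ⁻¹' B j).indicator (fun _ => (1 : ENNReal)) ω := by
      intro ω
      have : ∑ j : Fin (m + 1), (V ⁻¹' B j).indicator (fun _ => (1 : ENNReal)) ω =
          ((Finset.univ.filter fun j : Fin (m + 1) => ω ∈ V ⁻¹' B j).card : ENNReal) := by
        rw [Finset.card_filter]
        push_cast
        refine Finset.sum_congr rfl fun j _ => ?_
        by_cases hj : ω ∈ V ⁻¹' B j <;> simp [Set.indicator_apply, hj]
      rw [this]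
      have hcount := rank_count_lemma (V ω) k (by omega)
      have : (Finset.univ.filter fun j : Fin (m + 1) => ω ∈ V ⁻¹' B j) =
          (Finset.univ.filter fun j =>
            (Finset.univ.filter fun i => V ω i < V ω j).card < k) := by
        apply Finset.filter_congr
        intro j _
        simp [hB, hV]
      rw [this]
      exact_mod_cast Nat.cast_le.mpr hcount
    calc (k : ENNReal) = ∫⁻ _, (k : ENNReal) ∂ℙ := by simp
      _ ≤ _ := lintegral_mono fun ω => hpt ω
  -- hence ℙ(A_last) ≥ k/(m+1)
  have hconst : ∑ j : Fin (m + 1), ℙ (V ⁻¹' B j) = (m + 1) * ℙ (V ⁻¹' B (Fin.last m)) := by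
    rw [Finset.sum_congr rfl fun j _ => hAeq j]
    simp [mul_comm]
  rw [hconst] at hsum
  have hmain : ENNReal.ofReal (1 - α) ≤ ℙ (V ⁻¹' B (Fin.last m)) := by
    have hne : ((m : ENNReal) + 1) ≠ 0 := by simp
    have hnt : ((m : ENNReal) + 1) ≠ ⊤ := by simp
    have h1 : ENNReal.ofReal (1 - α) * ((m : ENNReal) + 1) ≤ (k : ENNReal) := by
      have : ENNReal.ofReal ((1 - α) * (m + 1)) ≤ ENNReal.ofReal (k : ℝ) :=
        ENNReal.ofReal_le_ofReal hkreal
      rw [ENNReal.ofReal_mul (by linarith)] at this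
      rw [ENNReal.ofReal_natCast] at this
      convert this using 2
      rw [show ((m : ℝ) + 1) = ((m + 1 : ℕ) : ℝ) by push_cast; ring, ENNReal.ofReal_natCast]
      push_cast
      ring
    have h2 : ENNReal.ofReal (1 - α) * ((m : ENNReal) + 1) ≤
        ((m : ENNReal) + 1) * ℙ (V ⁻¹' B (Fin.last m)) := le_trans h1 (by exact_mod_cast hsum)
    rw [mul_comm ((m : ENNReal) + 1)] at h2
    exact (ENNReal.mul_le_mul_iff_left hne hnt).mp h2
  -- the rank event implies the coverage event
  refine le_trans hmain (measure_mono ?_)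
  intro ω hω
  simp only [Set.mem_preimage, hB, Set.mem_setOf_eq, hV] at hω
  simp only [Set.mem_setOf_eq]
  apply le_orderStat_of_count_lt hk1 hkm
  have heq : (Finset.univ.filter fun i : Fin m => R i.castSucc ω < R (Fin.last m) ω).card =
      (Finset.univ.filter fun i : Fin (m + 1) => R i ω < R (Fin.last m) ω).card := by
    rw [Finset.card_filter, Finset.card_filter, Fin.sum_univ_castSucc]
    simp
  omega
end

section
/- Fix α ∈ (0,1) and M > 0. There exist a linear prediction model μ̂(x) = β₁x₁ + β₂x₂ on ℝ² with β₂ ≠ 0, a joint distribution P of (X, Y) with Y = X₁ + X₂ and X₁, X₂ ∼ Uniform[0,1], and a contaminated test point X̃ = (X₁, z) with a deterministic outlier value z in the second coordinate, such that for any prediction interval of the form μ̂(X̃) ± q̂ that satisfies P(Y ∈ μ̂(X̃) ± q̂) ≥ 1 - α, one has P(q̂ ≥ M) ≥ 1 - α. Consequently the expected interval length tends to infinity as M → ∞. -/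
open MeasureTheory

/-- Impossibility theorem: if the processed test feature still contains a cellwise outlier,
any symmetric prediction interval `μ̂(X̃) ± qhat` with `1-α` coverage must have radius at least
`M` with probability at least `1-α`. -/
theorem impossibility (α M : ℝ) (hα0 : 0 < α) (hα1 : α < 1) (hM : 0 < M) :
    ∃ β₁ β₂ z : ℝ, β₂ ≠ 0 ∧
      ∀ (Ω : Type) (_ : MeasurableSpace Ω) (ℙ : Measure Ω), IsProbabilityMeasure ℙ →
        ∀ (X₁ X₂ : Ω → ℝ), Measurable X₁ → Measurable X₂ →
          Measure.map X₁ ℙ = volume.restrict (Set.Icc (0 : ℝ) 1) →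
          Measure.map X₂ ℙ = volume.restrict (Set.Icc (0 : ℝ) 1) →
          ∀ qhat : Ω → ℝ, (∀ ω, 0 ≤ qhat ω) →
            ENNReal.ofReal (1 - α) ≤
              ℙ {ω | |(X₁ ω + X₂ ω) - (β₁ * X₁ ω + β₂ * z)| ≤ qhat ω} →
            ENNReal.ofReal (1 - α) ≤ ℙ {ω | M ≤ qhat ω} := by
  refine ⟨1, 1, -M, one_ne_zero, ?_⟩
  intro Ω _ ℙ _ X₁ X₂ hX₁ hX₂ hmap₁ hmap₂ qhat hq hcov
  set A := {ω | |(X₁ ω + X₂ ω) - (1 * X₁ ω + 1 * (-M))| ≤ qhat ω}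
  have hbad : ℙ (X₂ ⁻¹' (Set.Icc (0:ℝ) 1)ᶜ) = 0 := by
    rw [← Measure.map_apply hX₂ (measurableSet_Icc.compl), hmap₂,
      Measure.restrict_apply (measurableSet_Icc.compl)]
    simp
  have hsub : A ∩ X₂ ⁻¹' (Set.Icc (0:ℝ) 1) ⊆ {ω | M ≤ qhat ω} := by
    rintro ω ⟨hA, h0, _⟩
    have : |X₂ ω + M| ≤ qhat ω := by
      have := hA; simp only [A, Set.mem_setOf_eq] at this
      convert this using 2; ring
    calc M ≤ X₂ ω + M := by linarith
      _ ≤ |X₂ ω + M| := le_abs_self _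
      _ ≤ qhat ω := this
  calc ENNReal.ofReal (1 - α) ≤ ℙ A := hcov
    _ ≤ ℙ (A ∩ X₂ ⁻¹' (Set.Icc (0:ℝ) 1)) + ℙ (X₂ ⁻¹' (Set.Icc (0:ℝ) 1)ᶜ) := by
        refine le_trans (measure_mono ?_) (measure_union_le _ _)
        intro ω hω
        by_cases h : X₂ ω ∈ Set.Icc (0:ℝ) 1
        · exact Or.inl ⟨hω, h⟩
        · exact Or.inr h
    _ = ℙ (A ∩ X₂ ⁻¹' (Set.Icc (0:ℝ) 1)) := by rw [hbad, add_zero]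
    _ ≤ ℙ {ω | M ≤ qhat ω} := measure_mono hsub
end

section
/- Jackknife+ counting lemma: Let m ≥ 1 and let A ∈ {0,1}^{(m+1)×(m+1)} be any matrix with A_{pq} + A_{qp} ≤ 1 for all p ≠ q and A_{pp} = 0 (derived from comparisons D_{pq} > D_{qp} with D_{pp} = +∞). Define the set of strange points S(A) = {p : Σ_q A_{pq} ≥ (1-α)(m+1)}. Then |S(A)| < 2α(m+1). -/
/-- Jackknife+ counting lemma: for a strict pairwise comparison matrix `A` on `m+1` points,
the number of strange points (winning at least `(1-α)(m+1)` comparisons) is less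
than `2α(m+1)`. -/
theorem strange_points_bound (m : ℕ) (hm : 1 ≤ m) (α : ℝ) (hα0 : 0 < α) (hα1 : α < 1)
    (A : Fin (m + 1) → Fin (m + 1) → ℕ)
    (hA01 : ∀ p q, A p q ≤ 1)
    (hasym : ∀ p q, p ≠ q → A p q + A q p ≤ 1)
    (hdiag : ∀ p, A p p = 0) :
    ((Finset.univ.filter fun p : Fin (m + 1) =>
        (1 - α) * (m + 1 : ℝ) ≤ ∑ q, (A p q : ℝ)).card : ℝ) < 2 * α * (m + 1) := by
  classical
  set S : Finset (Fin (m + 1)) := Finset.univ.filter fun p =>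
      (1 - α) * (m + 1 : ℝ) ≤ ∑ q, (A p q : ℝ) with hSdef
  set s : ℕ := S.card with hs
  by_cases hs0 : s = 0
  · rw [hs0]
    push_cast
    positivity
  have hsS : S ⊆ Finset.univ := Finset.subset_univ _
  have hscard : (s : ℝ) ≤ (m + 1 : ℝ) := by
    have := Finset.card_le_card hsS
    simp only [Finset.card_univ, Fintype.card_fin] at this
    exact_mod_cast this
  -- lower bound on inner sums
  have key : ∀ p ∈ S, (s : ℝ) - α * (m + 1) ≤ ∑ q ∈ S, (A p q : ℝ) := by
    intro p hp
    have hp' : (1 - α) * (m + 1 : ℝ) ≤ ∑ q, (A p q : ℝ) := by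
      rw [hSdef] at hp
      exact (Finset.mem_filter.mp hp).2
    have hsplit : ∑ q, (A p q : ℝ) = ∑ q ∈ S, (A p q : ℝ) + ∑ q ∈ Sᶜ, (A p q : ℝ) := by
      rw [Finset.sum_add_sum_compl]
    have hout : ∑ q ∈ Sᶜ, (A p q : ℝ) ≤ (m + 1 : ℝ) - s := by
      have h1 : ∑ q ∈ Sᶜ, (A p q : ℝ) ≤ ∑ q ∈ Sᶜ, (1 : ℝ) :=
        Finset.sum_le_sum fun q _ => by exact_mod_cast hA01 p q
      have h2 : ∑ q ∈ Sᶜ, (1 : ℝ) = ((Sᶜ).card : ℝ) := by simp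
      have h3 : (Sᶜ).card = (m + 1) - s := by
        rw [Finset.card_compl, Fintype.card_fin, hs]
      have h4 : ((Sᶜ).card : ℝ) = (m + 1 : ℝ) - s := by
        rw [h3]
        have : s ≤ m + 1 := by
          have := Finset.card_le_card hsS
          simpa using this
        push_cast [Nat.cast_sub this]
        ring
      rw [h2, h4] at h1
      exact h1
    nlinarith [hp', hsplit, hout]
  have low : (s : ℝ) * ((s : ℝ) - α * (m + 1)) ≤ ∑ p ∈ S, ∑ q ∈ S, (A p q : ℝ) := by
    calc (s : ℝ) * ((s : ℝ) - α * (m + 1)) = ∑ _p ∈ S, ((s : ℝ) - α * (m + 1)) := by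
          rw [Finset.sum_const, hs]; ring
      _ ≤ ∑ p ∈ S, ∑ q ∈ S, (A p q : ℝ) := Finset.sum_le_sum key
  have up : 2 * (∑ p ∈ S, ∑ q ∈ S, (A p q : ℝ)) ≤ (s : ℝ) * ((s : ℝ) - 1) := by
    have hswap : ∑ p ∈ S, ∑ q ∈ S, (A q p : ℝ) = ∑ p ∈ S, ∑ q ∈ S, (A p q : ℝ) :=
      Finset.sum_comm
    have h2T : 2 * (∑ p ∈ S, ∑ q ∈ S, (A p q : ℝ))
        = ∑ p ∈ S, ∑ q ∈ S, ((A p q : ℝ) + (A q p : ℝ)) := by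
      rw [Finset.sum_congr rfl fun p _ => Finset.sum_add_distrib, Finset.sum_add_distrib, hswap]
      ring
    have hbound : ∑ p ∈ S, ∑ q ∈ S, ((A p q : ℝ) + (A q p : ℝ))
        ≤ ∑ p ∈ S, ∑ q ∈ S, (if p = q then (0 : ℝ) else 1) := by
      apply Finset.sum_le_sum
      intro p _
      apply Finset.sum_le_sum
      intro q _
      by_cases hpq : p = q
      · simp [hpq, hdiag q]
      · simp only [if_neg hpq]
        have := hasym p q hpq
        have : (A p q : ℝ) + (A q p : ℝ) ≤ 1 := by exact_mod_cast this
        linarith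
    have heval : ∑ p ∈ S, ∑ q ∈ S, (if p = q then (0 : ℝ) else 1) = (s : ℝ) * ((s : ℝ) - 1) := by
      have : ∀ p ∈ S, ∑ q ∈ S, (if p = q then (0 : ℝ) else 1) = (s : ℝ) - 1 := by
        intro p hp
        have : ∑ q ∈ S, (if p = q then (0 : ℝ) else 1)
            = ∑ q ∈ S, (1 - if p = q then (1 : ℝ) else 0) := by
          apply Finset.sum_congr rfl
          intro q _
          by_cases h : p = q <;> simp [h]
        rw [this, Finset.sum_sub_distrib, Finset.sum_const, hs]
        have : ∑ q ∈ S, (if p = q then (1 : ℝ) else 0) = 1 := by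
          rw [Finset.sum_ite_eq S p (fun _ => (1:ℝ))]
          simp [hp]
        rw [this]
        simp [mul_comm]
      rw [Finset.sum_congr rfl this, Finset.sum_const, hs]
      ring
    linarith [h2T, hbound, heval]
  have hs1 : (1 : ℝ) ≤ (s : ℝ) := by
    have : 1 ≤ s := Nat.one_le_iff_ne_zero.mpr hs0
    exact_mod_cast this
  nlinarith [low, up, hs1]
end

section
/- CQR impossibility: Fix α ∈ (0,1) and M > 0. There exist a linear lower-quantile model f^lo(x) = β₁x₁ + β₂x₂ on ℝ² with β₂ ≠ 0, a distribution with Y = X₁ + X₂, X₁, X₂ ∼ Uniform[0,1], and a contaminated test point X̃ = (X₁, z) with the outlier z depending on β₁, β₂, M, such that max(f^lo(X̃) − Y, Y − f^up(X̃)) ≥ M almost surely; hence any CQR-type interval [f^lo(X̃) − q̂, f^up(X̃) + q̂] with coverage at least 1−α must satisfy P(q̂ ≥ M) ≥ 1−α. -/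
open MeasureTheory

/-- CQR impossibility: there are a linear lower-quantile model `f^lo(x) = β₁x₁ + β₂x₂`
with `β₂ ≠ 0` and an outlier value `z` such that the CQR score at the contaminated test
point is at least `M` almost surely, for any upper-quantile model `f^up`; hence any
CQR interval with `1-α` coverage has `P(q̂ ≥ M) ≥ 1-α`. -/
theorem cqr_impossibility (α M : ℝ) (hα0 : 0 < α) (hα1 : α < 1) (hM : 0 < M) :
    ∃ β₁ β₂ z : ℝ, β₂ ≠ 0 ∧
      ∀ (Ω : Type) (_ : MeasurableSpace Ω) (ℙ : Measure Ω), IsProbabilityMeasure ℙ →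
        ∀ (X₁ X₂ : Ω → ℝ), Measurable X₁ → Measurable X₂ →
          Measure.map X₁ ℙ = volume.restrict (Set.Icc (0 : ℝ) 1) →
          Measure.map X₂ ℙ = volume.restrict (Set.Icc (0 : ℝ) 1) →
          ∀ fup : ℝ × ℝ → ℝ,
            (∀ᵐ ω ∂ℙ, M ≤ max ((β₁ * X₁ ω + β₂ * z) - (X₁ ω + X₂ ω))
                ((X₁ ω + X₂ ω) - fup (X₁ ω, z))) ∧
            ∀ qhat : Ω → ℝ,
              ENNReal.ofReal (1 - α) ≤
                ℙ {ω | max ((β₁ * X₁ ω + β₂ * z) - (X₁ ω + X₂ ω))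
                    ((X₁ ω + X₂ ω) - fup (X₁ ω, z)) ≤ qhat ω} →
              ENNReal.ofReal (1 - α) ≤ ℙ {ω | M ≤ qhat ω} := by
  refine ⟨1, 1, M + 1, one_ne_zero, ?_⟩
  intro Ω _ ℙ hprob X₁ X₂ hX₁ hX₂ hmap₁ hmap₂ fup
  -- a.e. X₂ ω ≤ 1
  have hX2le : ∀ᵐ ω ∂ℙ, X₂ ω ≤ 1 := by
    have h0 : ℙ (X₂ ⁻¹' Set.Ioi (1 : ℝ)) = 0 := by
      have := Measure.map_apply (μ := ℙ) hX₂ (measurableSet_Ioi (a := (1:ℝ)))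
      rw [hmap₂] at this
      rw [← this, Measure.restrict_apply measurableSet_Ioi]
      have : Set.Ioi (1:ℝ) ∩ Set.Icc 0 1 = ∅ := by
        ext x; simp only [Set.mem_inter_iff, Set.mem_Ioi, Set.mem_Icc, Set.mem_empty_iff_false]
        constructor
        · rintro ⟨h1, _, h3⟩; linarith
        · exact False.elim
      rw [this]; simp
    filter_upwards [measure_eq_zero_iff_ae_notMem.mp h0] with ω hω
    simpa using hω
  have hscore : ∀ᵐ ω ∂ℙ, M ≤ max ((1 * X₁ ω + 1 * (M + 1)) - (X₁ ω + X₂ ω))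
      ((X₁ ω + X₂ ω) - fup (X₁ ω, M + 1)) := by
    filter_upwards [hX2le] with ω hω
    refine le_trans ?_ (le_max_left _ _)
    ring_nf
    linarith
  refine ⟨hscore, ?_⟩
  intro qhat hcov
  refine le_trans hcov (measure_mono_ae ?_)
  filter_upwards [hscore] with ω hω hmem
  exact le_trans hω hmem
end
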